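/- Let R₀ > 0, let w, z ∈ ℂ with |z - w| < R₀, and let 0 < ε < R₀ - |z - w|. Then the integral of 1/(ζ̄ - z̄)² over the region B_{R₀}(w) \ B_ε(z) (with respect to planar Lebesgue measure) equals 0. -/

import Mathlib

open MeasureTheory Metric Complex ComplexConjugate
open Set Real

/-- The conjugate Beurling kernel integrand (centered at `0`). -/
noncomputable def fK (ζ : ℂ) : ℂ := ((conj ζ)^2)⁻¹

lemma fK_meas : Measurable fK := ((Complex.continuous_conj.pow 2).measurable).inv

lemma fK_norm (v : ℂ) : ‖fK v‖ = (‖v‖^2)⁻¹ := by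
  simp [fK, norm_inv, norm_pow]

lemma fK_integrableOn {a B : ℝ} (ha : 0 < a) {S : Set ℂ}
    (hS : S ⊆ {v : ℂ | a ≤ ‖v‖} ∩ ball 0 B) : IntegrableOn fK S := by
  refine IntegrableOn.mono_set ?_ hS
  refine Measure.integrableOn_of_bounded (μ := volume) (M := (a^2)⁻¹)
    (ne_top_of_le_ne_top measure_ball_lt_top.ne (measure_mono inter_subset_right))
    fK_meas.aestronglyMeasurable ?_
  filter_upwards [ae_restrict_mem (((isClosed_le continuous_const
    continuous_norm).measurableSet).inter measurableSet_ball)] with v hv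
  rw [fK_norm]
  exact inv_anti₀ (by positivity) (pow_le_pow_left₀ ha.le hv.1 2)

lemma key_poly (R s2 : ℝ) (w u : ℂ) (hs : s2 = R^2 - normSq w) :
    normSq ((s2:ℂ) + w * conj u) - R^2 * normSq u = -s2 * (normSq (u - w) - R^2) := by
  subst hs
  simp [Complex.normSq_apply, Complex.add_re, Complex.add_im, Complex.mul_re, Complex.mul_im,
    Complex.sub_re, Complex.sub_im, Complex.conj_re, Complex.conj_im, Complex.ofReal_re,
    Complex.ofReal_im, ← Complex.ofReal_pow]
  ring

noncomputable def mulConjCLM (d : ℂ) : ℂ →L[ℝ] ℂ :=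
  ((d • (1 : ℂ →L[ℂ] ℂ)).restrictScalars ℝ).comp
    (Complex.conjCLE : ℂ ≃L[ℝ] ℂ).toContinuousLinearMap

lemma mulConjCLM_apply (d h : ℂ) : mulConjCLM d h = d * conj h := rfl

lemma det_mulConjCLM (d : ℂ) : (mulConjCLM d).det = -Complex.normSq d := by
  have : (mulConjCLM d).det = LinearMap.det ((mulConjCLM d) : ℂ →ₗ[ℝ] ℂ) := rfl
  rw [this, ← LinearMap.det_toMatrix Complex.basisOneI, Matrix.det_fin_two]
  simp only [LinearMap.toMatrix_apply, Complex.coe_basisOneI, Complex.coe_basisOneI_repr,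
    ContinuousLinearMap.coe_coe]
  show (mulConjCLM d 1).re * (mulConjCLM d I).im - (mulConjCLM d I).re * (mulConjCLM d 1).im
      = -Complex.normSq d
  simp only [mulConjCLM_apply, map_one, Complex.conj_I, mul_one, Complex.normSq_apply,
    Complex.mul_re, Complex.mul_im, Complex.neg_re, Complex.neg_im, Complex.I_re, Complex.I_im,
    mul_neg]
  ring

lemma hasFDerivAt_iota (s2 : ℝ) {u : ℂ} (hu : u ≠ 0) :
    HasFDerivAt (fun v : ℂ => (s2:ℂ) * (conj v)⁻¹)
      (mulConjCLM (-(s2:ℂ) * ((conj u)^2)⁻¹)) u := by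
  have hcu : (conj u : ℂ) ≠ 0 := by simpa using hu
  have h1 : HasDerivAt (fun w : ℂ => (s2:ℂ) * w⁻¹) ((s2:ℂ) * (-((conj u)^2)⁻¹)) (conj u) :=
    (hasDerivAt_inv hcu).const_mul _
  have h2 : HasFDerivAt (fun v : ℂ => conj v)
      ((Complex.conjCLE : ℂ ≃L[ℝ] ℂ).toContinuousLinearMap) u :=
    Complex.conjCLE.hasFDerivAt
  have h3 := (h1.hasFDerivAt.restrictScalars ℝ).comp u h2
  refine h3.congr_fderiv ?_
  ext h
  simp [mulConjCLM_apply, Complex.conjCLE_apply]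
  ring

lemma inversion_integral {s2 : ℝ} (hs2 : 0 < s2) {S : Set ℂ} (hS : MeasurableSet S)
    (hS0 : ∀ u ∈ S, u ≠ 0) :
    ∫ v in (fun u : ℂ => (s2:ℂ) * (conj u)⁻¹) '' S, fK v = ∫ u in S, fK u := by
  have hinj : InjOn (fun u : ℂ => (s2:ℂ) * (conj u)⁻¹) S := by
    intro x hx y hy hxy
    simp only at hxy
    have hs2' : (s2:ℂ) ≠ 0 := by exact_mod_cast hs2.ne'
    have := mul_left_cancel₀ hs2' hxy
    have := inv_injective this
    simpa using congrArg conj this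
  rw [integral_image_eq_integral_abs_det_fderiv_smul volume hS
      (fun x hx => (hasFDerivAt_iota s2 (hS0 x hx)).hasFDerivWithinAt) hinj fK]
  refine setIntegral_congr_fun hS fun u hu => ?_
  have hu0 : u ≠ 0 := hS0 u hu
  have hcu : (conj u : ℂ) ≠ 0 := by simpa using hu0
  have hs2' : (s2:ℂ) ≠ 0 := by exact_mod_cast hs2.ne'
  have hnz : Complex.normSq u ≠ 0 := by simpa using Complex.normSq_pos.mpr hu0 |>.ne'
  rw [det_mulConjCLM]
  rw [abs_neg, _root_.abs_of_nonneg (Complex.normSq_nonneg _)]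
  have hns : Complex.normSq (-(s2:ℂ) * ((conj u)^2)⁻¹) = s2^2 * ((Complex.normSq u)^2)⁻¹ := by
    simp [Complex.normSq_mul, Complex.normSq_inv, map_pow, Complex.normSq_conj,
      Complex.normSq_ofReal, sq]
  rw [hns, fK, fK]
  have : conj ((s2:ℂ) * (conj u)⁻¹) = (s2:ℂ) * u⁻¹ := by
    simp [map_mul, Complex.conj_inv]
  rw [this, real_smul]
  have hcast : ((s2^2 * ((Complex.normSq u)^2)⁻¹ : ℝ) : ℂ)
      = (s2:ℂ)^2 * ((u * conj u)^2)⁻¹ := by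
    push_cast
    rw [Complex.mul_conj]
  rw [hcast]
  field_simp

lemma annulus_integral_zero {a : ℝ} (A : ℝ) (ha : 0 < a) :
    ∫ v in ball (0:ℂ) A \ ball 0 a, fK v = 0 := by
  have hmeas : MeasurableSet (ball (0:ℂ) A \ ball 0 a) :=
    measurableSet_ball.diff measurableSet_ball
  rw [← integral_indicator hmeas, ← Complex.integral_comp_polarCoord_symm]
  have hset : MeasurableSet (Set.Ico a A ×ˢ Set.Ioo (-π) π) :=
    measurableSet_Ico.prod measurableSet_Ioo
  have h1 : ∫ p in polarCoord.target,
        p.1 • (ball (0:ℂ) A \ ball 0 a).indicator fK (Complex.polarCoord.symm p)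
      = ∫ p in polarCoord.target,
        (Set.Ico a A ×ˢ Set.Ioo (-π) π).indicator
          (fun p : ℝ × ℝ => ((p.1:ℂ))⁻¹ * Complex.exp ((2 * Complex.I) * p.2)) p := by
    refine setIntegral_congr_fun polarCoord.open_target.measurableSet fun p hp => ?_
    obtain ⟨hp1, hp2⟩ := hp
    simp only [Set.mem_Ioi] at hp1
    have habs : ‖(Complex.polarCoord.symm p : ℂ)‖ = p.1 := by
      rw [Complex.norm_polarCoord_symm, abs_of_pos hp1]
    have hmem : Complex.polarCoord.symm p ∈ ball (0:ℂ) A \ ball 0 a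
        ↔ (a ≤ p.1 ∧ p.1 < A) := by
      simp only [Set.mem_diff, mem_ball, dist_eq_norm, sub_zero, habs, not_lt, and_comm]
    by_cases hc : a ≤ p.1 ∧ p.1 < A
    · rw [Set.indicator_of_mem (hmem.mpr hc), Set.indicator_of_mem (by exact ⟨⟨hc.1, hc.2⟩, hp2⟩)]
      have hsymm : Complex.polarCoord.symm p = p.1 * Complex.exp (p.2 * Complex.I) := by
        rw [Complex.polarCoord_symm_apply, Complex.exp_mul_I]
        push_cast; ring
      rw [fK, hsymm]
      have : conj ((p.1:ℂ) * Complex.exp (p.2 * Complex.I))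
          = (p.1:ℂ) * Complex.exp (-(p.2 * Complex.I)) := by
        rw [map_mul, Complex.conj_ofReal, ← Complex.exp_conj]
        congr 1
        simp [Complex.conj_I, Complex.conj_ofReal]
      rw [this]
      have hp1' : (p.1:ℂ) ≠ 0 := by exact_mod_cast hp1.ne'
      rw [real_smul, mul_pow, ← Complex.exp_nat_mul, mul_inv, ← Complex.exp_neg]
      have hE : (-(((2:ℕ):ℂ) * -((p.2:ℂ) * Complex.I))) = 2 * Complex.I * (p.2:ℂ) := by
        push_cast; ring
      rw [hE]
      field_simp
    · rw [Set.indicator_of_notMem (fun hmem' => hc (hmem.mp hmem')),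
        Set.indicator_of_notMem (fun hmem' => hc ⟨hmem'.1.1, hmem'.1.2⟩), smul_zero]
  rw [h1]
  have hsub : (Set.Ico a A ×ˢ Set.Ioo (-π) π) ⊆ polarCoord.target := by
    rintro ⟨r, θ⟩ ⟨hr, hθ⟩
    exact ⟨lt_of_lt_of_le ha hr.1, hθ⟩
  rw [setIntegral_indicator hset, Set.inter_eq_right.mpr hsub]
  rw [Measure.volume_eq_prod, setIntegral_prod]
  · have : ∀ r ∈ Set.Ico a A, ∫ θ in Set.Ioo (-π) π,
        ((r:ℂ))⁻¹ * Complex.exp ((2 * Complex.I) * θ) = 0 := by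
      intro r _
      rw [MeasureTheory.integral_const_mul]
      have : ∫ θ in Set.Ioo (-π) π, Complex.exp ((2 * Complex.I) * θ)
          = ∫ θ in (-π)..π, Complex.exp ((2 * Complex.I) * θ) := by
        rw [intervalIntegral.integral_of_le (by linarith [pi_pos]), ← integral_Ioc_eq_integral_Ioo]
      rw [this, integral_exp_mul_complex (by simp [Complex.I_ne_zero])]
      have h2pi : Complex.exp (2 * Complex.I * (π:ℂ)) = 1 := by
        rw [show (2 * Complex.I * (π:ℂ)) = 2 * (π:ℂ) * Complex.I by ring,
          Complex.exp_two_pi_mul_I]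
      have h2pi' : Complex.exp (2 * Complex.I * ((-π:ℝ):ℂ)) = 1 := by
        push_cast
        rw [show (2 * Complex.I * (-(π:ℂ))) = -(2 * (π:ℂ) * Complex.I) by ring,
          Complex.exp_neg, Complex.exp_two_pi_mul_I, inv_one]
      rw [h2pi, h2pi']
      simp
    rw [setIntegral_congr_fun measurableSet_Ico this]
    simp
  · refine Measure.integrableOn_of_bounded (M := a⁻¹) ?_ ?_ ?_
    · rw [Measure.prod_prod, Real.volume_Ico, Real.volume_Ioo]
      exact ENNReal.mul_ne_top ENNReal.ofReal_ne_top ENNReal.ofReal_ne_top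
    · refine Measurable.aestronglyMeasurable (Measurable.mul ?_ ?_)
      · exact (Complex.measurable_ofReal.comp measurable_fst).inv
      · exact Complex.measurable_exp.comp
          ((Complex.measurable_ofReal.comp measurable_snd).const_mul _)
    · filter_upwards [ae_restrict_mem hset] with p hp
      have h1 : ‖Complex.exp (2 * Complex.I * (p.2:ℂ))‖ = 1 := by
        rw [Complex.norm_exp]; simp
      rw [norm_mul, h1, mul_one, norm_inv, Complex.norm_real, Real.norm_eq_abs,
        abs_of_pos (lt_of_lt_of_le ha hp.1.1)]
      exact inv_anti₀ ha hp.1.1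

lemma cb_ae (x : ℂ) (r : ℝ) : (closedBall x r : Set ℂ) =ᵐ[volume] ball x r := by
  refine (MeasureTheory.ae_eq_set).mpr ⟨?_, ?_⟩
  · rw [closedBall_diff_ball]
    exact Measure.addHaar_sphere volume x r
  · rw [diff_eq_empty.mpr ball_subset_closedBall]
    simp

lemma iotaMem_iff {R s2 : ℝ} (hR : 0 < R) (w : ℂ) (hs : s2 = R^2 - Complex.normSq w)
    (hs2 : 0 < s2) {u : ℂ} (hu : u ≠ 0) :
    R < ‖(s2:ℂ) * (conj u)⁻¹ + w‖ ↔ ‖u - w‖ < R := by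
  have hcu : (conj u : ℂ) ≠ 0 := by simpa using hu
  have hnu : 0 < Complex.normSq u := Complex.normSq_pos.mpr hu
  have hfac : (s2:ℂ) * (conj u)⁻¹ + w = ((s2:ℂ) + w * conj u) * (conj u)⁻¹ := by
    field_simp
  have hv : Complex.normSq ((s2:ℂ) * (conj u)⁻¹ + w)
      = Complex.normSq ((s2:ℂ) + w * conj u) / Complex.normSq u := by
    rw [hfac, Complex.normSq_mul, Complex.normSq_inv, Complex.normSq_conj, div_eq_mul_inv]
  have hkey := key_poly R s2 w u hs
  have e1 : ‖(s2:ℂ) * (conj u)⁻¹ + w‖^2 * Complex.normSq u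
      = R^2 * Complex.normSq u - s2 * (‖u - w‖^2 - R^2) := by
    rw [Complex.sq_norm, hv, div_mul_cancel₀ _ hnu.ne',
      Complex.sq_norm]
    linarith [hkey]
  rw [show (R < ‖(s2:ℂ) * (conj u)⁻¹ + w‖) ↔ R^2 < ‖(s2:ℂ) * (conj u)⁻¹ + w‖^2 from
      (pow_lt_pow_iff_left₀ hR.le (norm_nonneg _) two_ne_zero).symm,
    show (‖u - w‖ < R) ↔ ‖u - w‖^2 < R^2 from
      (pow_lt_pow_iff_left₀ (norm_nonneg _) hR.le two_ne_zero).symm]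
  constructor
  · intro h
    nlinarith [e1, hnu, hs2]
  · intro h
    nlinarith [e1, hnu, hs2]

lemma norm_iota {s2 : ℝ} (hs2 : 0 ≤ s2) (u : ℂ) :
    ‖(s2:ℂ) * (conj u)⁻¹‖ = s2 / ‖u‖ := by
  rw [norm_mul, norm_inv, RCLike.norm_conj, Complex.norm_real, Real.norm_eq_abs,
    _root_.abs_of_nonneg hs2, div_eq_mul_inv]

lemma iota_image {R ε s2 : ℝ} (w : ℂ) (hR : 0 < R) (hd : ‖w‖ < R) (hε : 0 < ε)
    (hεR : ε < R - ‖w‖) (hs : s2 = R^2 - Complex.normSq w) (hs2 : 0 < s2) :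
    (fun u : ℂ => (s2:ℂ) * (conj u)⁻¹) '' (ball w R \ ball 0 ε)
      = closedBall 0 (s2/ε) \ closedBall (-w) R := by
  have hs2' : (s2:ℂ) ≠ 0 := by exact_mod_cast hs2.ne'
  ext v
  simp only [Set.mem_image, Set.mem_diff, mem_ball, mem_closedBall, dist_eq_norm, sub_zero,
    not_lt, not_le, sub_neg_eq_add]
  constructor
  · rintro ⟨u, ⟨hu1, hu2⟩, rfl⟩
    have hu0 : u ≠ 0 := by
      intro h; rw [h, norm_zero] at hu2; linarith
    refine ⟨?_, ?_⟩
    · rw [norm_iota hs2.le]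
      exact div_le_div_of_nonneg_left hs2.le hε hu2
    · exact (iotaMem_iff hR w hs hs2 hu0).mpr hu1
  · rintro ⟨h1, h2⟩
    have hv0 : v ≠ 0 := by
      intro h; rw [h, zero_add] at h2; linarith
    have hcv : (conj v : ℂ) ≠ 0 := by simpa using hv0
    have hinv : (s2:ℂ) * (conj ((s2:ℂ) * (conj v)⁻¹))⁻¹ = v := by
      rw [map_mul, map_inv₀, Complex.conj_conj, Complex.conj_ofReal]
      field_simp
    have hiv0 : (s2:ℂ) * (conj v)⁻¹ ≠ 0 := mul_ne_zero hs2' (inv_ne_zero hcv)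
    refine ⟨(s2:ℂ) * (conj v)⁻¹, ⟨?_, ?_⟩, hinv⟩
    · have := (iotaMem_iff hR w hs hs2 hiv0)
      rw [hinv] at this
      exact this.mp h2
    · rw [norm_iota hs2.le]
      rw [le_div_iff₀ (norm_pos_iff.mpr hv0)]
      rw [le_div_iff₀ hε] at h1
      linarith

theorem cancellation_lemma (R₀ : ℝ) (hR₀ : 0 < R₀) (w z : ℂ)
    (hzw : ‖z - w‖ < R₀) (ε : ℝ) (hε : 0 < ε) (hεR : ε < R₀ - ‖z - w‖) :
    ∫ ζ in (ball w R₀ \ ball z ε), ((conj ζ - conj z)^2)⁻¹ = 0 := by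
  set w' : ℂ := w - z with hw'
  have hd : ‖w'‖ < R₀ := by rw [hw', norm_sub_rev]; exact hzw
  have hεR' : ε < R₀ - ‖w'‖ := by rw [hw', norm_sub_rev]; exact hεR
  set S : Set ℂ := ball w' R₀ \ ball 0 ε with hSdef
  have hSmeas : MeasurableSet S := measurableSet_ball.diff measurableSet_ball
  -- Step 1: translation
  have htrans : (∫ ζ in (ball w R₀ \ ball z ε), ((conj ζ - conj z)^2)⁻¹)
      = ∫ u in S, fK u := by
    have hTmeas : MeasurableSet (ball w R₀ \ ball z ε) :=
      measurableSet_ball.diff measurableSet_ball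
    rw [← integral_indicator hTmeas, ← integral_indicator hSmeas]
    rw [← integral_add_right_eq_self
      ((ball w R₀ \ ball z ε).indicator (fun ζ => ((conj ζ - conj z)^2)⁻¹)) z]
    congr 1
    funext x
    have hmem : (x + z ∈ ball w R₀ \ ball z ε) ↔ x ∈ S := by
      simp only [hSdef, Set.mem_diff, mem_ball, dist_eq_norm]
      rw [show x + z - w = x - (w - z) by ring, show x + z - z = x by ring, sub_zero, hw']
    by_cases hx : x ∈ S
    · rw [Set.indicator_of_mem (hmem.mpr hx), Set.indicator_of_mem hx]
      rw [fK, show conj (x + z) - conj z = conj x by rw [map_add]; ring]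
    · rw [Set.indicator_of_notMem (fun h => hx (hmem.mp h)), Set.indicator_of_notMem hx]
  rw [htrans]
  -- setup
  set s2 : ℝ := R₀^2 - Complex.normSq w' with hs2def
  have hnsq : Complex.normSq w' = ‖w'‖^2 := by
    rw [Complex.normSq_eq_norm_sq]
  have hs2 : 0 < s2 := by rw [hs2def, hnsq]; nlinarith [norm_nonneg w']
  set A : ℝ := s2 / ε with hAdef
  have hS0 : ∀ u ∈ S, u ≠ 0 := by
    rintro u ⟨_, hu2⟩ rfl
    exact hu2 (by simpa [mem_ball] using hε)
  -- Step 2: inversion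
  have hinv := inversion_integral hs2 hSmeas hS0
  rw [iota_image w' hR₀ hd hε hεR' hs2def hs2] at hinv
  -- Step 3: closed balls to open balls a.e.
  have hae : ((closedBall (0:ℂ) A \ closedBall (-w') R₀ : Set ℂ))
      =ᵐ[volume] (ball (0:ℂ) A \ ball (-w') R₀ : Set ℂ) :=
    (cb_ae 0 A).diff (cb_ae (-w') R₀)
  rw [setIntegral_congr_set hae] at hinv
  -- Step 4: annulus splitting
  have hsub1 : ball (0:ℂ) ε ⊆ ball (-w') R₀ := by
    apply ball_subset_ball'
    rw [dist_zero_left, norm_neg]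
    linarith
  have hsub2 : ball (-w') R₀ ⊆ ball (0:ℂ) A := by
    apply ball_subset_ball'
    rw [dist_zero_right, norm_neg]
    rw [hAdef, le_div_iff₀ hε]
    rw [hs2def, hnsq]
    nlinarith [norm_nonneg w']
  have hsplit : ball (0:ℂ) A \ ball 0 ε
      = (ball (0:ℂ) A \ ball (-w') R₀) ∪ (ball (-w') R₀ \ ball 0 ε) := by
    ext x
    simp only [Set.mem_diff, Set.mem_union]
    constructor
    · rintro ⟨hA, hε'⟩
      by_cases hx : x ∈ ball (-w') R₀
      · exact Or.inr ⟨hx, hε'⟩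
      · exact Or.inl ⟨hA, hx⟩
    · rintro (⟨hA, hx⟩ | ⟨hx, hε'⟩)
      · exact ⟨hA, fun h => hx (hsub1 h)⟩
      · exact ⟨hsub2 hx, hε'⟩
  have hpos : (0:ℝ) < R₀ - ‖w'‖ := by linarith
  have hint1 : IntegrableOn fK (ball (0:ℂ) A \ ball (-w') R₀) := by
    refine fK_integrableOn (B := A) hpos ?_
    rintro v ⟨hv1, hv2⟩
    refine ⟨?_, hv1⟩
    simp only [Set.mem_setOf_eq]
    rw [mem_ball, not_lt, dist_eq_norm, sub_neg_eq_add] at hv2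
    have := norm_add_le v w'
    linarith
  have hint2 : IntegrableOn fK (ball (-w') R₀ \ ball 0 ε) := by
    refine fK_integrableOn (B := A) hε ?_
    rintro v ⟨hv1, hv2⟩
    refine ⟨?_, hsub2 hv1⟩
    simp only [Set.mem_setOf_eq]
    rw [mem_ball, not_lt, dist_eq_norm, sub_zero] at hv2
    exact hv2
  have hdisj : Disjoint (ball (0:ℂ) A \ ball (-w') R₀) (ball (-w') R₀ \ ball 0 ε) := by
    rw [Set.disjoint_left]
    rintro x ⟨_, hx2⟩ ⟨hx3, _⟩
    exact hx2 hx3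
  have hzero := annulus_integral_zero (a := ε) A hε
  rw [hsplit, setIntegral_union hdisj (measurableSet_ball.diff measurableSet_ball)
    hint1 hint2] at hzero
  -- Step 5: negation symmetry
  have hneg : ∫ v in ball (-w') R₀ \ ball 0 ε, fK v = ∫ u in S, fK u := by
    rw [← integral_indicator (measurableSet_ball.diff measurableSet_ball),
      ← integral_indicator hSmeas,
      ← integral_neg_eq_self ((ball (-w') R₀ \ ball 0 ε).indicator fK) volume]
    congr 1
    funext x
    have hmem : (-x ∈ ball (-w') R₀ \ ball 0 ε) ↔ x ∈ S := by
      simp only [hSdef, Set.mem_diff, mem_ball, dist_eq_norm]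
      rw [show -x - -w' = -(x - w') by ring, norm_neg, show -x - 0 = -x by ring, norm_neg,
        sub_zero]
    have hval : fK (-x) = fK x := by
      simp [fK, map_neg, neg_sq]
    by_cases hx : x ∈ S
    · rw [Set.indicator_of_mem (hmem.mpr hx), Set.indicator_of_mem hx, hval]
    · rw [Set.indicator_of_notMem (fun h => hx (hmem.mp h)), Set.indicator_of_notMem hx]
  rw [hneg, hinv] at hzero
  exact add_self_eq_zero.mp hzero
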